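/- Let P_t(x) = (1/(2πt)) exp(−|x|²/(2t)) be the two-dimensional heat kernel. Then for all y ∈ ℝ² \ {0} and T ∈ (0,∞): ∫₀^T P_{2r}(y) dr = (1/(4π)) log(4T/|y|²) − γ_EM/(4π) + ε(4T/|y|²), where γ_EM is the Euler–Mascheroni constant and ε(a) := ∫₀^{1/a} (𝟙_{(0,1]}(t) − e^{−t})/(4πt) dt + (log⁻ a)/(4π) with log⁻ a = −log(min(a,1)). -/

import Mathlib

open MeasureTheory Set Filter
open scoped Topology

/-- The two-dimensional heat kernel `P_t(x) = (2πt)⁻¹ exp(−‖x‖²/(2t))`. -/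
noncomputable def heatK (t : ℝ) (x : EuclideanSpace ℝ (Fin 2)) : ℝ :=
  (2 * Real.pi * t)⁻¹ * Real.exp (-‖x‖ ^ 2 / (2 * t))

/-- The Euler–Mascheroni constant, `γ_EM = −∫₀^∞ e^{−t} log t dt`. -/
noncomputable def gammaEM : ℝ := -∫ t in Set.Ioi (0:ℝ), Real.exp (-t) * Real.log t

/-- The remainder `ε(a) = ∫₀^{1/a} (𝟙_{(0,1]}(t) − e^{−t})/(4πt) dt + (log⁻ a)/(4π)`,
with `log⁻ a = −log(min(a,1))`. -/
noncomputable def epsRem (a : ℝ) : ℝ :=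
  (∫ t in Set.Ioo (0:ℝ) (1 / a),
      ((if 0 < t ∧ t ≤ 1 then (1:ℝ) else 0) - Real.exp (-t)) / (4 * Real.pi * t))
    + (-Real.log (min a 1)) / (4 * Real.pi)

namespace Stmt3Aux

lemma one_sub_exp_le (t : ℝ) : 1 - Real.exp (-t) ≤ t := by
  have := Real.add_one_le_exp (-t); linarith

lemma one_sub_exp_nonneg {t : ℝ} (ht : 0 ≤ t) : 0 ≤ 1 - Real.exp (-t) := by
  have : Real.exp (-t) ≤ 1 := Real.exp_le_one_iff.mpr (by linarith)
  linarith

/-- `|log t| ≤ 2 t^{-1/2} + x` for `t ∈ (0, x)`. -/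
lemma abs_log_le {t x : ℝ} (ht : 0 < t) (htx : t < x) :
    |Real.log t| ≤ 2 * t ^ (-(1/2) : ℝ) + x := by
  have hpow : (0:ℝ) < t ^ (-(1/2) : ℝ) := Real.rpow_pos_of_pos ht _
  rcases le_or_gt t 1 with h1 | h1
  · have hlog : Real.log t ≤ 0 := Real.log_nonpos ht.le h1
    rw [abs_of_nonpos hlog]
    have : Real.log (t ^ (-(1/2) : ℝ)) ≤ t ^ (-(1/2) : ℝ) - 1 :=
      Real.log_le_sub_one_of_pos hpow
    rw [Real.log_rpow ht] at this
    nlinarith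
  · have hlog : 0 ≤ Real.log t := Real.log_nonneg h1.le
    rw [abs_of_nonneg hlog]
    have : Real.log t ≤ t - 1 := Real.log_le_sub_one_of_pos ht
    nlinarith

lemma meas_f1 : Measurable (fun t : ℝ => Real.exp (-t) * Real.log t) :=
  (Real.measurable_exp.comp measurable_neg).mul Real.measurable_log

lemma intOn_f1_Ioo {x : ℝ} (hx : 0 < x) :
    IntegrableOn (fun t : ℝ => Real.exp (-t) * Real.log t) (Ioo 0 x) := by
  have hg : IntegrableOn (fun t : ℝ => 2 * t ^ (-(1/2) : ℝ) + x) (Ioo 0 x) := by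
    refine Integrable.add (Integrable.const_mul ?_ 2) (integrableOn_const ?_)
    · exact (intervalIntegral.integrableOn_Ioo_rpow_iff hx).2 (by norm_num)
    · simp [Real.volume_Ioo]
  refine Integrable.mono' hg (meas_f1.aestronglyMeasurable.restrict) ?_
  filter_upwards [ae_restrict_mem measurableSet_Ioo] with t ht
  have h1 : Real.exp (-t) ≤ 1 := Real.exp_le_one_iff.mpr (by linarith [ht.1])
  have h2 : |Real.log t| ≤ 2 * t ^ (-(1/2) : ℝ) + x := abs_log_le ht.1 ht.2
  have h3 : (0:ℝ) ≤ |Real.log t| := abs_nonneg _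
  calc ‖Real.exp (-t) * Real.log t‖ = Real.exp (-t) * |Real.log t| := by
        rw [norm_mul, Real.norm_eq_abs, Real.norm_eq_abs, abs_of_pos (Real.exp_pos _)]
    _ ≤ 1 * |Real.log t| := by gcongr
    _ ≤ 2 * t ^ (-(1/2) : ℝ) + x := by rw [one_mul]; exact h2

lemma intOn_f1_Ioi {x : ℝ} (hx : 0 < x) :
    IntegrableOn (fun t : ℝ => Real.exp (-t) * Real.log t) (Ioi x) := by
  have hg : IntegrableOn (fun t : ℝ => Real.exp (-t) * t + x⁻¹ * Real.exp (-t)) (Ioi x) := by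
    refine Integrable.add ?_ (Integrable.const_mul ?_ _)
    · have := Real.GammaIntegral_convergent (s := 2) (by norm_num)
      have h2 : IntegrableOn (fun t : ℝ => Real.exp (-t) * t) (Ioi 0) := by
        refine this.congr_fun (fun t ht => ?_) measurableSet_Ioi
        norm_num [Real.rpow_one]
      exact h2.mono_set (Ioi_subset_Ioi hx.le)
    · exact (by simpa using exp_neg_integrableOn_Ioi x (b := 1) one_pos :
        IntegrableOn (fun t : ℝ => Real.exp (-t)) (Ioi x))
  refine Integrable.mono' hg (meas_f1.aestronglyMeasurable.restrict) ?_
  filter_upwards [ae_restrict_mem measurableSet_Ioi] with t ht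
  have ht0 : 0 < t := hx.trans ht
  have hbound : |Real.log t| ≤ t + x⁻¹ := by
    rcases le_or_gt 1 t with h1 | h1
    · rw [abs_of_nonneg (Real.log_nonneg h1)]
      have := Real.log_le_sub_one_of_pos ht0
      have : (0:ℝ) < x⁻¹ := inv_pos.2 hx
      linarith [Real.log_le_sub_one_of_pos ht0]
    · rw [abs_of_nonpos (Real.log_nonpos ht0.le h1.le)]
      have h2 : Real.log t⁻¹ ≤ t⁻¹ - 1 := Real.log_le_sub_one_of_pos (inv_pos.2 ht0)
      rw [Real.log_inv] at h2
      have h3 : t⁻¹ ≤ x⁻¹ := by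
        apply inv_anti₀ hx (le_of_lt ht)
      linarith
  calc ‖Real.exp (-t) * Real.log t‖ = Real.exp (-t) * |Real.log t| := by
        rw [norm_mul, Real.norm_eq_abs, Real.norm_eq_abs, abs_of_pos (Real.exp_pos _)]
    _ ≤ Real.exp (-t) * (t + x⁻¹) := by
        gcongr
    _ = Real.exp (-t) * t + x⁻¹ * Real.exp (-t) := by ring

lemma intOn_f2 {x : ℝ} (hx : 0 < x) :
    IntegrableOn (fun t : ℝ => (1 - Real.exp (-t)) / t) (Ioo 0 x) := by
  have hg : IntegrableOn (fun _ : ℝ => (1:ℝ)) (Ioo 0 x) :=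
    integrableOn_const (by simp [Real.volume_Ioo])
  refine Integrable.mono' hg ?_ ?_
  · exact ((measurable_const.sub (Real.measurable_exp.comp measurable_neg)).div
      measurable_id).aestronglyMeasurable.restrict
  · filter_upwards [ae_restrict_mem measurableSet_Ioo] with t ht
    have h1 : 0 ≤ 1 - Real.exp (-t) := one_sub_exp_nonneg ht.1.le
    have h2 : 1 - Real.exp (-t) ≤ t := one_sub_exp_le t
    rw [Real.norm_eq_abs, abs_of_nonneg (div_nonneg h1 ht.1.le)]
    rw [div_le_one ht.1]
    exact h2

lemma intOn_f3 {x : ℝ} (hx : 0 < x) :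
    IntegrableOn (fun t : ℝ => Real.exp (-t) / t) (Ioi x) := by
  have hg : IntegrableOn (fun t : ℝ => x⁻¹ * Real.exp (-t)) (Ioi x) := by
    refine Integrable.const_mul ?_ _
    exact (by simpa using exp_neg_integrableOn_Ioi x (b := 1) one_pos :
      IntegrableOn (fun t : ℝ => Real.exp (-t)) (Ioi x))
  refine Integrable.mono' hg ?_ ?_
  · exact ((Real.measurable_exp.comp measurable_neg).div
      measurable_id).aestronglyMeasurable.restrict
  · filter_upwards [ae_restrict_mem measurableSet_Ioi] with t ht
    have ht0 : 0 < t := hx.trans ht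
    rw [Real.norm_eq_abs, abs_of_nonneg (div_nonneg (Real.exp_pos _).le ht0.le)]
    rw [div_le_iff₀ ht0]
    have h3 : 1 ≤ x⁻¹ * t := by
      rw [← inv_mul_cancel₀ hx.ne']
      exact mul_le_mul_of_nonneg_left ht.le (inv_pos.2 hx).le
    nlinarith [Real.exp_pos (-t)]

/-- Integration by parts on `(x, ∞)`. -/
lemma ibp_Ioi {x : ℝ} (hx : 0 < x) :
    ∫ t in Ioi x, Real.exp (-t) * Real.log t
      = Real.exp (-x) * Real.log x + ∫ t in Ioi x, Real.exp (-t) / t := by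
  set f : ℝ → ℝ := fun t => -(Real.exp (-t) * Real.log t)
  set f' : ℝ → ℝ := fun t => Real.exp (-t) * Real.log t - Real.exp (-t) / t
  have hderiv : ∀ t ∈ Ici x, HasDerivAt f (f' t) t := by
    intro t ht
    have ht0 : 0 < t := lt_of_lt_of_le hx ht
    have h1 : HasDerivAt (fun t : ℝ => Real.exp (-t)) (-Real.exp (-t)) t := by
      simpa [Function.comp_def] using (Real.hasDerivAt_exp (-t)).comp t (hasDerivAt_neg t)
    have h2 : HasDerivAt Real.log t⁻¹ t := Real.hasDerivAt_log ht0.ne'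
    have := (h1.mul h2).neg
    refine this.congr_deriv ?_
    simp only [f']
    ring
  have hint : IntegrableOn f' (Ioi x) := (intOn_f1_Ioi hx).sub (intOn_f3 hx)
  have htend : Tendsto f atTop (𝓝 0) := by
    have hb : Tendsto (fun t : ℝ => t * Real.exp (-t)) atTop (𝓝 0) := by
      simpa [pow_one] using Real.tendsto_pow_mul_exp_neg_atTop_nhds_zero 1
    rw [← neg_zero]
    refine Tendsto.neg ?_
    refine squeeze_zero_norm' ?_ hb
    filter_upwards [eventually_ge_atTop (1:ℝ)] with t ht
    have ht0 : (0:ℝ) < t := lt_of_lt_of_le one_pos ht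
    have hlog : 0 ≤ Real.log t := Real.log_nonneg ht
    have hlt : Real.log t ≤ t := (Real.log_le_sub_one_of_pos ht0).trans (by linarith)
    rw [Real.norm_eq_abs, abs_of_nonneg (by positivity)]
    calc Real.exp (-t) * Real.log t ≤ Real.exp (-t) * t := by gcongr
      _ = t * Real.exp (-t) := by ring
  have := integral_Ioi_of_hasDerivAt_of_tendsto' hderiv hint htend
  have hsplit : ∫ t in Ioi x, f' t
      = (∫ t in Ioi x, Real.exp (-t) * Real.log t) - ∫ t in Ioi x, Real.exp (-t) / t :=
    integral_sub (intOn_f1_Ioi hx) (intOn_f3 hx)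
  rw [hsplit] at this
  have hfx : f x = -(Real.exp (-x) * Real.log x) := rfl
  rw [hfx] at this
  linarith

/-- Integration by parts on `(0, x)`. -/
lemma ibp_Ioo {x : ℝ} (hx : 0 < x) :
    (∫ t in Ioo 0 x, Real.exp (-t) * Real.log t)
      + ∫ t in Ioo 0 x, (1 - Real.exp (-t)) / t
      = (1 - Real.exp (-x)) * Real.log x := by
  set f : ℝ → ℝ := fun t => (1 - Real.exp (-t)) * Real.log t
  set f' : ℝ → ℝ := fun t => Real.exp (-t) * Real.log t + (1 - Real.exp (-t)) / t
  have hderiv : ∀ t ∈ Ioo 0 x, HasDerivAt f (f' t) t := by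
    intro t ht
    have ht0 : 0 < t := ht.1
    have h1 : HasDerivAt (fun t : ℝ => 1 - Real.exp (-t)) (Real.exp (-t)) t := by
      have : HasDerivAt (fun t : ℝ => Real.exp (-t)) (-Real.exp (-t)) t := by
        simpa [Function.comp_def] using (Real.hasDerivAt_exp (-t)).comp t (hasDerivAt_neg t)
      exact ((hasDerivAt_const t (1:ℝ)).sub this).congr_deriv (by ring)
    have h2 : HasDerivAt Real.log t⁻¹ t := Real.hasDerivAt_log ht0.ne'
    have := h1.mul h2
    refine this.congr_deriv ?_
    simp only [f']
    ring
  have hint' : IntegrableOn f' (Ioo 0 x) := (intOn_f1_Ioo hx).add (intOn_f2 hx)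
  have hint : IntervalIntegrable f' volume 0 x := by
    rw [intervalIntegrable_iff_integrableOn_Ioo_of_le hx.le]
    exact hint'
  have ha : Tendsto f (𝓝[>] (0:ℝ)) (𝓝 0) := by
    have hb : Tendsto (fun t : ℝ => Real.log t * t) (𝓝[>] (0:ℝ)) (𝓝 0) := by
      simpa [Real.rpow_one] using tendsto_log_mul_rpow_nhdsGT_zero (r := 1) one_pos
    refine squeeze_zero_norm' ?_ (by have := hb.abs; rwa [abs_zero] at this)
    filter_upwards [self_mem_nhdsWithin] with t (ht : 0 < t)
    have h1 : 0 ≤ 1 - Real.exp (-t) := one_sub_exp_nonneg ht.le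
    have h2 : 1 - Real.exp (-t) ≤ t := one_sub_exp_le t
    rw [Real.norm_eq_abs, abs_mul, abs_of_nonneg h1]
    calc (1 - Real.exp (-t)) * |Real.log t| ≤ t * |Real.log t| := by
          gcongr
      _ = |Real.log t * t| := by rw [abs_mul, abs_of_nonneg ht.le]; ring
  have hbten : Tendsto f (𝓝[<] x) (𝓝 (f x)) := by
    have hc : ContinuousAt f x := by
      have : ContinuousAt Real.log x := Real.continuousAt_log hx.ne'
      exact (Continuous.continuousAt (by continuity)).mul this
    exact hc.tendsto.mono_left nhdsWithin_le_nhds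
  have key := intervalIntegral.integral_eq_sub_of_hasDerivAt_of_tendsto hx hderiv hint ha hbten
  rw [intervalIntegral.integral_of_le hx.le, integral_Ioc_eq_integral_Ioo] at key
  have hsplit : ∫ t in Ioo 0 x, f' t
      = (∫ t in Ioo 0 x, Real.exp (-t) * Real.log t)
        + ∫ t in Ioo 0 x, (1 - Real.exp (-t)) / t :=
    integral_add (intOn_f1_Ioo hx) (intOn_f2 hx)
  rw [hsplit] at key
  simpa [f] using key

/-- The key exponential-integral identity. -/
lemma expint_eq {x : ℝ} (hx : 0 < x) :
    ∫ t in Ioi x, Real.exp (-t) / t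
      = -gammaEM - Real.log x + ∫ t in Ioo 0 x, (1 - Real.exp (-t)) / t := by
  have hsplit : (∫ t in Ioi (0:ℝ), Real.exp (-t) * Real.log t)
      = (∫ t in Ioo 0 x, Real.exp (-t) * Real.log t)
        + ∫ t in Ioi x, Real.exp (-t) * Real.log t := by
    rw [← Ioo_union_Ici_eq_Ioi hx, setIntegral_union, integral_Ici_eq_integral_Ioi]
    · exact disjoint_left.mpr fun t ht h => absurd h (not_le.mpr ht.2)
    · exact measurableSet_Ici
    · exact intOn_f1_Ioo hx
    · exact (integrableOn_Ici_iff_integrableOn_Ioi).2 (intOn_f1_Ioi hx)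
  have h1 := ibp_Ioi hx
  have h2 := ibp_Ioo hx
  have hg : gammaEM = -∫ t in Ioi (0:ℝ), Real.exp (-t) * Real.log t := rfl
  have hexp : Real.exp (-x) * Real.log x + (1 - Real.exp (-x)) * Real.log x = Real.log x := by
    ring
  rw [hg, hsplit]
  linarith


/-- Change of variables `t = c/(4r)`. -/
lemma subst {c T : ℝ} (hc : 0 < c) (hT : 0 < T) :
    (∫ r in Ioo (0:ℝ) T, (2 * Real.pi * (2 * r))⁻¹ * Real.exp (-c / (2 * (2 * r))))
      = ∫ t in Ioi (c / (4 * T)), Real.exp (-t) / (4 * Real.pi * t) := by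
  have hx0 : 0 < c / (4 * T) := by positivity
  set x0 := c / (4 * T) with hx0def
  set f : ℝ → ℝ := fun t => c / (4 * t) with hf
  set f' : ℝ → ℝ := fun t => -(c / (4 * t ^ 2)) with hf'
  have himg : f '' Ioi x0 = Ioo 0 T := by
    ext r
    constructor
    · rintro ⟨t, ht, rfl⟩
      have ht0 : 0 < t := hx0.trans ht
      have ht' : c / (4 * T) < t := ht
      rw [div_lt_iff₀ (by positivity)] at ht'
      constructor
      · positivity
      · rw [div_lt_iff₀ (by positivity)]
        nlinarith
    · rintro ⟨hr0, hrT⟩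
      refine ⟨c / (4 * r), ?_, ?_⟩
      · rw [hx0def, mem_Ioi, div_lt_div_iff₀ (by positivity) (by positivity)]
        nlinarith
      · show c / (4 * (c / (4 * r))) = r
        have h4 : 4 * (c / (4 * r)) = c / r := by field_simp
        rw [h4, div_div_eq_mul_div, mul_div_cancel_left₀ _ hc.ne']
  have hderiv : ∀ t ∈ Ioi x0, HasDerivWithinAt f (f' t) (Ioi x0) t := by
    intro t ht
    have ht0 : 0 < t := hx0.trans ht
    have h1 : HasDerivAt (fun t : ℝ => t⁻¹) (-(t ^ 2)⁻¹) t := hasDerivAt_inv ht0.ne'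
    have h2 : HasDerivAt (fun t : ℝ => (c / 4) * t⁻¹) ((c / 4) * -(t ^ 2)⁻¹) t :=
      h1.const_mul _
    have heq : f = fun t : ℝ => (c / 4) * t⁻¹ := by
      funext u; rw [hf]; ring
    have hval : c / 4 * -(t ^ 2)⁻¹ = f' t := by
      rw [hf']; field_simp
    have : HasDerivAt f (f' t) t := by
      rw [heq, ← hval]; exact h2
    exact this.hasDerivWithinAt
  have hinj : InjOn f (Ioi x0) := by
    intro a ha b hb hab
    have ha0 : 0 < a := hx0.trans ha
    have hb0 : 0 < b := hx0.trans hb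
    rw [hf] at hab
    rw [div_eq_div_iff (by positivity) (by positivity)] at hab
    have := mul_left_cancel₀ hc.ne' hab
    linarith
  have := integral_image_eq_integral_abs_deriv_smul measurableSet_Ioi hderiv hinj
    (fun r => (2 * Real.pi * (2 * r))⁻¹ * Real.exp (-c / (2 * (2 * r))))
  rw [himg] at this
  rw [this]
  refine setIntegral_congr_fun measurableSet_Ioi (fun t ht => ?_)
  have ht0 : 0 < t := hx0.trans ht
  have hpi : 0 < Real.pi := Real.pi_pos
  have habs : |f' t| = c / (4 * t ^ 2) := by
    rw [hf', abs_neg, abs_of_pos (by positivity)]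
  rw [smul_eq_mul, habs, hf]
  have harg : -c / (2 * (2 * (c / (4 * t)))) = -t := by field_simp; ring
  rw [harg]
  field_simp
  ring

/-- Simplification of the remainder term. -/
lemma eps_eq {a : ℝ} (ha : 0 < a) :
    epsRem a = (4 * Real.pi)⁻¹ * ∫ t in Ioo (0:ℝ) (1/a), (1 - Real.exp (-t)) / t := by
  have hpi : 0 < Real.pi := Real.pi_pos
  set x := 1 / a with hxdef
  have hx : 0 < x := by positivity
  set F : ℝ → ℝ := fun t => ((if 0 < t ∧ t ≤ 1 then (1:ℝ) else 0) - Real.exp (-t)) / t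
    with hF
  set G : ℝ → ℝ := fun t => (1 - Real.exp (-t)) / t with hG
  have hFdef : epsRem a = (∫ t in Ioo (0:ℝ) x, F t / (4 * Real.pi)) +
      (-Real.log (min a 1)) / (4 * Real.pi) := by
    rw [epsRem]
    congr 1
    refine setIntegral_congr_fun measurableSet_Ioo (fun t ht => ?_)
    rw [hF]
    field_simp
  rw [hFdef, integral_div]
  rcases le_or_gt 1 a with hc | hc
  · -- `x ≤ 1`: the indicator is `1` on `(0,x)` and `min a 1 = 1`.
    have hx1 : x ≤ 1 := by
      rw [hxdef]; rw [div_le_one ha]; exact hc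
    have hFG : ∫ t in Ioo (0:ℝ) x, F t = ∫ t in Ioo (0:ℝ) x, G t := by
      refine setIntegral_congr_fun measurableSet_Ioo (fun t ht => ?_)
      simp only [hF, hG]
      rw [if_pos ⟨ht.1, ht.2.le.trans hx1⟩]
    rw [hFG, min_eq_right hc]
    simp [div_eq_inv_mul]
  · -- `x > 1`
    have hx1 : 1 < x := by
      rw [hxdef, lt_div_iff₀ ha]; linarith
    have hmin : min a 1 = a := min_eq_left hc.le
    have hmeasF : Measurable F := by
      have : MeasurableSet {t : ℝ | 0 < t ∧ t ≤ 1} := by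
        have : {t : ℝ | 0 < t ∧ t ≤ 1} = Ioc 0 1 := rfl
        rw [this]; exact measurableSet_Ioc
      exact ((Measurable.ite this measurable_const measurable_const).sub
        (Real.measurable_exp.comp measurable_neg)).div measurable_id
    have hintF : IntegrableOn F (Ioo 0 x) := by
      have hg : IntegrableOn (fun _ : ℝ => (1:ℝ)) (Ioo 0 x) :=
        integrableOn_const (by simp [Real.volume_Ioo])
      refine Integrable.mono' hg hmeasF.aestronglyMeasurable.restrict ?_
      filter_upwards [ae_restrict_mem measurableSet_Ioo] with t ht
      simp only [hF]
      rw [Real.norm_eq_abs, abs_div, abs_of_pos ht.1, div_le_one ht.1]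
      have he0 : 0 < Real.exp (-t) := Real.exp_pos _
      have he1 : Real.exp (-t) ≤ 1 := Real.exp_le_one_iff.mpr (by linarith [ht.1])
      have h2 := one_sub_exp_le t
      rcases le_or_gt t 1 with h | h
      · rw [if_pos ⟨ht.1, h⟩, abs_of_nonneg (by linarith)]; linarith
      · rw [if_neg (by push_neg; intro _; linarith), abs_of_nonpos (by linarith)]
        linarith
    have hintG : IntegrableOn G (Ioo 0 x) := intOn_f2 hx
    have hsub1 : Ioc (0:ℝ) 1 ⊆ Ioo 0 x := fun t ht => ⟨ht.1, lt_of_le_of_lt ht.2 hx1⟩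
    have hsub2 : Ioo (1:ℝ) x ⊆ Ioo 0 x := fun t ht => ⟨lt_trans one_pos ht.1, ht.2⟩
    have hunion : Ioc (0:ℝ) 1 ∪ Ioo 1 x = Ioo 0 x := Ioc_union_Ioo_eq_Ioo zero_le_one hx1
    have hdisj : Disjoint (Ioc (0:ℝ) 1) (Ioo 1 x) :=
      disjoint_left.mpr fun t ht h2 => absurd h2.1 (not_lt.mpr ht.2)
    have hsplitF : ∫ t in Ioo (0:ℝ) x, F t
        = (∫ t in Ioc (0:ℝ) 1, F t) + ∫ t in Ioo (1:ℝ) x, F t := by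
      rw [← hunion] at hintF ⊢
      exact setIntegral_union hdisj measurableSet_Ioo
        (hintF.mono_set subset_union_left) (hintF.mono_set subset_union_right)
    have hsplitG : ∫ t in Ioo (0:ℝ) x, G t
        = (∫ t in Ioc (0:ℝ) 1, G t) + ∫ t in Ioo (1:ℝ) x, G t := by
      rw [← hunion] at hintG ⊢
      exact setIntegral_union hdisj measurableSet_Ioo
        (hintG.mono_set subset_union_left) (hintG.mono_set subset_union_right)
    have hFG1 : ∫ t in Ioc (0:ℝ) 1, F t = ∫ t in Ioc (0:ℝ) 1, G t := by
      refine setIntegral_congr_fun measurableSet_Ioc (fun t ht => ?_)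
      simp only [hF, hG]
      rw [if_pos ⟨ht.1, ht.2⟩]
    have hint_inv : IntegrableOn (fun t : ℝ => t⁻¹) (Ioo 1 x) := by
      have h : IntervalIntegrable (fun t : ℝ => (id t)⁻¹) volume 1 x :=
        intervalIntegral.intervalIntegrable_inv (fun t ht => by
          rw [uIcc_of_le hx1.le] at ht; exact (lt_of_lt_of_le one_pos ht.1).ne')
          continuousOn_id
      rw [intervalIntegrable_iff_integrableOn_Ioo_of_le hx1.le] at h
      exact h
    have hFG2 : ∫ t in Ioo (1:ℝ) x, F t
        = (∫ t in Ioo (1:ℝ) x, G t) - ∫ t in Ioo (1:ℝ) x, t⁻¹ := by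
      rw [← integral_sub (hintG.mono_set hsub2) hint_inv]
      refine setIntegral_congr_fun measurableSet_Ioo (fun t ht => ?_)
      have ht0 : 0 < t := lt_trans one_pos ht.1
      simp only [hF, hG]
      rw [if_neg (show ¬(0 < t ∧ t ≤ 1) from fun h => absurd ht.1 (not_lt.mpr h.2))]
      field_simp
      ring
    have hlog : ∫ t in Ioo (1:ℝ) x, t⁻¹ = Real.log x := by
      have h0 : (0:ℝ) ∉ uIcc (1:ℝ) x := by
        rw [uIcc_of_le hx1.le]; intro h; exact absurd h.1 (by norm_num)
      have := _root_.integral_inv h0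
      rw [intervalIntegral.integral_of_le hx1.le, integral_Ioc_eq_integral_Ioo] at this
      rw [this, div_one]
    have hloga : Real.log a = -Real.log x := by
      rw [hxdef, one_div, Real.log_inv, neg_neg]
    rw [hsplitF, hFG1, hFG2, hlog, hmin, hloga, hsplitG]
    field_simp
    ring

end Stmt3Aux

open Stmt3Aux in
/-- For `y ∈ ℝ² \ {0}` and `T ∈ (0,∞)`:
`∫₀^T P_{2r}(y) dr = (1/(4π)) log(4T/|y|²) − γ_EM/(4π) + ε(4T/|y|²)`. -/
theorem stmt_3 (y : EuclideanSpace ℝ (Fin 2)) (hy : y ≠ 0) (T : ℝ) (hT : 0 < T) :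
    (∫ r in Set.Ioo (0:ℝ) T, heatK (2 * r) y)
      = (4 * Real.pi)⁻¹ * Real.log (4 * T / ‖y‖ ^ 2)
        - gammaEM / (4 * Real.pi) + epsRem (4 * T / ‖y‖ ^ 2) := by
  have hpi : 0 < Real.pi := Real.pi_pos
  have hc : 0 < ‖y‖ ^ 2 := by
    have : 0 < ‖y‖ := norm_pos_iff.mpr hy
    positivity
  set c := ‖y‖ ^ 2 with hcdef
  have ha : 0 < 4 * T / c := by positivity
  have hx0 : 0 < c / (4 * T) := by positivity
  have hinv : 1 / (4 * T / c) = c / (4 * T) := by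
    rw [one_div, inv_div]
  have h1 : (∫ r in Set.Ioo (0:ℝ) T, heatK (2 * r) y)
      = ∫ t in Set.Ioi (c / (4 * T)), Real.exp (-t) / (4 * Real.pi * t) := by
    rw [← subst hc hT]
    rfl
  have h2 : (∫ t in Set.Ioi (c / (4 * T)), Real.exp (-t) / (4 * Real.pi * t))
      = (4 * Real.pi)⁻¹ * ∫ t in Set.Ioi (c / (4 * T)), Real.exp (-t) / t := by
    rw [← integral_const_mul]
    refine setIntegral_congr_fun measurableSet_Ioi (fun t ht => ?_)
    have ht0 : 0 < t := hx0.trans ht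
    field_simp
  have h3 := expint_eq hx0
  have h4 := eps_eq ha
  rw [hinv] at h4
  have hloga : Real.log (4 * T / c) = -Real.log (c / (4 * T)) := by
    rw [← Real.log_inv, inv_div]
  rw [h1, h2, h3, h4, hloga]
  ring
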